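/- arXiv:2001.02565 — 7 statements merged into one kernel-verified Lean document; each statement's English description precedes it below -/
import Mathlib

section
/- For parameters c = 2b+1, the Basener–Ross system admits the Darboux first integral H(x,y) = x^{2b}((2b+1)y² − 2(2b+1)y + 2x). Precisely: let b, c ∈ ℝ with c = 2b+1, let I ⊆ ℝ be an open interval and let x, y : ℝ → ℝ be differentiable on I with x'(t) = x(t)(1 − y(t)), y'(t) = b·y(t)² + (1−c)·y(t) + x(t) and x(t) > 0 for all t ∈ I. Then the function t ↦ x(t)^{2b}·((2b+1)·y(t)² − 2(2b+1)·y(t) + 2x(t)) is constant on I. -/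
/-- For `c = 2b+1`, the Basener–Ross system `ẋ = x(1-y)`, `ẏ = b y² + (1-c) y + x`
admits the Darboux first integral
`H(x,y) = x^(2b) ((2b+1) y² − 2(2b+1) y + 2x)`:
along every solution with `x > 0` on an open interval, `H(x(t), y(t))` is constant. -/
theorem basener_ross_darboux_first_integral
    (b c : ℝ) (hc : c = 2 * b + 1)
    (I : Set ℝ) (hIopen : IsOpen I) (hIconn : IsPreconnected I)
    (x y : ℝ → ℝ)
    (hx : ∀ t ∈ I, HasDerivAt x (x t * (1 - y t)) t)
    (hy : ∀ t ∈ I, HasDerivAt y (b * y t ^ 2 + (1 - c) * y t + x t) t)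
    (hxpos : ∀ t ∈ I, 0 < x t) :
    ∀ t ∈ I, ∀ t' ∈ I,
      x t ^ (2 * b) * ((2 * b + 1) * y t ^ 2 - 2 * (2 * b + 1) * y t + 2 * x t) =
        x t' ^ (2 * b) * ((2 * b + 1) * y t' ^ 2 - 2 * (2 * b + 1) * y t' + 2 * x t') := by
  subst hc
  set H : ℝ → ℝ := fun t =>
    x t ^ (2 * b) * ((2 * b + 1) * y t ^ 2 - 2 * (2 * b + 1) * y t + 2 * x t) with hH
  have key : ∀ t ∈ I, HasDerivAt H 0 t := by
    intro t ht
    have hx' := hx t ht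
    have hy' := hy t ht
    have hxne : x t ≠ 0 := (hxpos t ht).ne'
    have h1 : HasDerivAt (fun s => x s ^ (2 * b))
        ((x t * (1 - y t)) * (2 * b) * x t ^ (2 * b - 1)) t :=
      hx'.rpow_const (Or.inl hxne)
    have h2 : HasDerivAt (fun s => (2 * b + 1) * y s ^ 2 - 2 * (2 * b + 1) * y s + 2 * x s)
        ((2 * b + 1) * ((2 : ℕ) * y t ^ (2 - 1) * (b * y t ^ 2 + (1 - (2 * b + 1)) * y t + x t))
          - 2 * (2 * b + 1) * (b * y t ^ 2 + (1 - (2 * b + 1)) * y t + x t)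
          + 2 * (x t * (1 - y t))) t := by
      exact (((hy'.pow 2).const_mul ((2 : ℝ) * b + 1)).sub
        (hy'.const_mul (2 * (2 * b + 1)))).add (hx'.const_mul 2)
    have h3 := h1.mul h2
    have hv : x t ^ (2 * b - 1) * x t = x t ^ (2 * b) := by
      rw [← Real.rpow_add_one hxne]; ring_nf
    refine h3.congr_deriv (Eq.symm ?_)
    simp only [pow_one, Nat.cast_ofNat]
    linear_combination
      (-(2 * b * (1 - y t) * ((2 * b + 1) * y t ^ 2 - 2 * (2 * b + 1) * y t + 2 * x t))) * hv
  have hconv : Convex ℝ I := hIconn.ordConnected.convex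
  intro t ht t' ht'
  refine hconv.is_const_of_fderivWithin_eq_zero (fun s hs => ((key s hs).differentiableAt).differentiableWithinAt) ?_ ht ht'
  intro s hs
  rw [fderivWithin_of_isOpen hIopen hs, (key s hs).hasFDerivAt.fderiv]
  ext
  simp
end

section
/- For c = 1/2 and b = −1/4, the Basener–Ross system admits the Darboux invariant I₁ = x^{−1/2}(y² + 4x)·e^{−t/2}. Precisely: let I ⊆ ℝ be an open interval and x, y : ℝ → ℝ differentiable on I with x'(t) = x(t)(1 − y(t)), y'(t) = −(1/4)·y(t)² + (1/2)·y(t) + x(t) and x(t) > 0 for all t ∈ I. Then the function t ↦ x(t)^{−1/2}·(y(t)² + 4x(t))·Real.exp(−t/2) is constant on I. -/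
/-- For `c = 1/2`, `b = −1/4`, the Basener–Ross system `ẋ = x(1-y)`,
`ẏ = −(1/4) y² + (1/2) y + x` admits the Darboux invariant
`I₁ = x^(−1/2) (y² + 4x) e^(−t/2)`: along every solution with `x > 0` on an open
interval, `I₁(x(t), y(t), t)` is constant. -/
theorem basener_ross_darboux_invariant_I1
    (I : Set ℝ) (hIopen : IsOpen I) (hIconn : IsPreconnected I)
    (x y : ℝ → ℝ)
    (hx : ∀ t ∈ I, HasDerivAt x (x t * (1 - y t)) t)
    (hy : ∀ t ∈ I, HasDerivAt y (-(1/4) * y t ^ 2 + (1/2) * y t + x t) t)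
    (hxpos : ∀ t ∈ I, 0 < x t) :
    ∀ t ∈ I, ∀ t' ∈ I,
      x t ^ (-(1/2) : ℝ) * (y t ^ 2 + 4 * x t) * Real.exp (-t / 2) =
        x t' ^ (-(1/2) : ℝ) * (y t' ^ 2 + 4 * x t') * Real.exp (-t' / 2) := by
  have key : ∀ t ∈ I, HasDerivAt
      (fun s => x s ^ (-(1/2) : ℝ) * (y s ^ 2 + 4 * x s) * Real.exp (-s / 2)) 0 t := by
    intro t ht
    have hxt := hxpos t ht
    have h1 : HasDerivAt (fun s => x s ^ (-(1/2) : ℝ))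
        ((x t * (1 - y t)) * (-(1/2)) * x t ^ ((-(1/2) : ℝ) - 1)) t :=
      (hx t ht).rpow_const (Or.inl hxt.ne')
    have h2 : HasDerivAt (fun s => y s ^ 2 + 4 * x s)
        (2 * y t ^ 1 * (-(1/4) * y t ^ 2 + (1/2) * y t + x t) + 4 * (x t * (1 - y t))) t := by
      have := ((hy t ht).fun_pow 2).fun_add ((hx t ht).const_mul 4)
      simpa using this
    have h3 : HasDerivAt (fun s : ℝ => Real.exp (-s / 2)) (Real.exp (-t / 2) * (-1 / 2)) t := by
      have : HasDerivAt (fun s : ℝ => -s / 2) (-1 / 2) t := by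
        simpa using ((hasDerivAt_id t).neg.div_const 2)
      simpa using this.exp
    have hD := (h1.fun_mul h2).fun_mul h3
    refine hD.congr_deriv ?_
    have hrw : x t ^ ((-(1/2) : ℝ) - 1) = x t ^ (-(1/2) : ℝ) / x t :=
      Real.rpow_sub_one hxt.ne' _
    rw [hrw]
    field_simp
    ring
  intro t ht t' ht'
  have hconv : Convex ℝ I := convex_iff_ordConnected.mpr hIconn.ordConnected
  refine hconv.is_const_of_fderivWithin_eq_zero
    (fun s hs => (key s hs).differentiableAt.differentiableWithinAt) ?_ ht ht'
  intro s hs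
  rw [fderivWithin_of_isOpen hIopen hs, (key s hs).hasFDerivAt.fderiv]
  ext
  simp
end

section
/- For c = 1/2 and b = −1/4, the Basener–Ross system admits the Darboux invariant I₂ = x^{−1/2}((y−2)² + 4x)·e^{t/2}. Precisely: let I ⊆ ℝ be an open interval and x, y : ℝ → ℝ differentiable on I with x'(t) = x(t)(1 − y(t)), y'(t) = −(1/4)·y(t)² + (1/2)·y(t) + x(t) and x(t) > 0 for all t ∈ I. Then the function t ↦ x(t)^{−1/2}·((y(t) − 2)² + 4x(t))·Real.exp(t/2) is constant on I. -/
/-- A function with zero derivative on an open preconnected set is locally constant there. -/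
lemma aux_locally_const {I : Set ℝ} (hIopen : IsOpen I) {F : ℝ → ℝ}
    (hF : ∀ t ∈ I, HasDerivAt F 0 t) : ∀ s ∈ I, ∀ᶠ w in nhds s, F w = F s := by
  intro s hs
  obtain ⟨ε, hε, hball⟩ := Metric.isOpen_iff.1 hIopen s hs
  have hconst : ∀ u v : ℝ, u ∈ Metric.ball s ε → v ∈ Metric.ball s ε → u ≤ v → F v = F u := by
    intro u v hu hv huv
    have hIcc : Set.Icc u v ⊆ Metric.ball s ε := by
      intro w hw
      exact (convex_ball s ε).ordConnected.out hu hv hw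
    have hcont : ContinuousOn F (Set.Icc u v) := fun w hw =>
      ((hF w (hball (hIcc hw))).continuousAt).continuousWithinAt
    have hderiv : ∀ w ∈ Set.Ico u v, HasDerivWithinAt F 0 (Set.Ici w) w := fun w hw =>
      (hF w (hball (hIcc ⟨hw.1, hw.2.le⟩))).hasDerivWithinAt
    exact constant_of_has_deriv_right_zero hcont hderiv v ⟨huv, le_rfl⟩
  filter_upwards [Metric.ball_mem_nhds s hε] with w hw
  rcases le_total w s with h | h
  · exact (hconst w s hw (Metric.mem_ball_self hε) h).symm ▸
      (hconst w s hw (Metric.mem_ball_self hε) h)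
  · exact hconst s w (Metric.mem_ball_self hε) hw h

/-- A function with zero derivative on an open preconnected set is constant there. -/
lemma aux_const_of_deriv_zero {I : Set ℝ} (hIopen : IsOpen I) (hIconn : IsPreconnected I)
    {F : ℝ → ℝ} (hF : ∀ t ∈ I, HasDerivAt F 0 t) :
    ∀ t ∈ I, ∀ t' ∈ I, F t = F t' := by
  intro t ht t' ht'
  by_contra hne
  set U : Set ℝ := {s | s ∈ I ∧ F s = F t} with hU
  set V : Set ℝ := {s | s ∈ I ∧ F s ≠ F t} with hV
  have hUopen : IsOpen U := by
    rw [isOpen_iff_mem_nhds]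
    rintro s ⟨hsI, hsF⟩
    filter_upwards [aux_locally_const hIopen hF s hsI, hIopen.mem_nhds hsI] with w hw hwI
    exact ⟨hwI, hw.trans hsF⟩
  have hVopen : IsOpen V := by
    rw [isOpen_iff_mem_nhds]
    rintro s ⟨hsI, hsF⟩
    filter_upwards [aux_locally_const hIopen hF s hsI, hIopen.mem_nhds hsI] with w hw hwI
    exact ⟨hwI, hw ▸ hsF⟩
  have hcover : I ⊆ U ∪ V := fun s hs => by
    by_cases h : F s = F t
    · exact Or.inl ⟨hs, h⟩
    · exact Or.inr ⟨hs, h⟩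
  have h1 : (I ∩ U).Nonempty := ⟨t, ht, ht, rfl⟩
  have h2 : (I ∩ V).Nonempty := ⟨t', ht', ht', fun h => hne h.symm⟩
  obtain ⟨w, -, ⟨-, hw1⟩, ⟨-, hw2⟩⟩ := hIconn U V hUopen hVopen hcover h1 h2
  exact hw2 hw1

/-- For `c = 1/2`, `b = −1/4`, the Basener–Ross system `ẋ = x(1-y)`,
`ẏ = −(1/4) y² + (1/2) y + x` admits the Darboux invariant
`I₂ = x^(−1/2) ((y−2)² + 4x) e^(t/2)`: along every solution with `x > 0` on an open
interval, `I₂(x(t), y(t), t)` is constant. -/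
theorem basener_ross_darboux_invariant_I2
    (I : Set ℝ) (hIopen : IsOpen I) (hIconn : IsPreconnected I)
    (x y : ℝ → ℝ)
    (hx : ∀ t ∈ I, HasDerivAt x (x t * (1 - y t)) t)
    (hy : ∀ t ∈ I, HasDerivAt y (-(1/4) * y t ^ 2 + (1/2) * y t + x t) t)
    (hxpos : ∀ t ∈ I, 0 < x t) :
    ∀ t ∈ I, ∀ t' ∈ I,
      x t ^ (-(1/2) : ℝ) * ((y t - 2) ^ 2 + 4 * x t) * Real.exp (t / 2) =
        x t' ^ (-(1/2) : ℝ) * ((y t' - 2) ^ 2 + 4 * x t') * Real.exp (t' / 2) := by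
  apply aux_const_of_deriv_zero hIopen hIconn
  intro t ht
  have hx' := hx t ht
  have hy' := hy t ht
  have hxp := hxpos t ht
  have h1 : HasDerivAt (fun t => x t ^ (-(1/2) : ℝ))
      (x t * (1 - y t) * (-(1/2) : ℝ) * x t ^ ((-(1/2) : ℝ) - 1)) t :=
    hx'.rpow_const (Or.inl hxp.ne')
  have h2 : HasDerivAt (fun t => (y t - 2) ^ 2 + 4 * x t)
      ((2 : ℕ) * (y t - 2) ^ 1 * (-(1/4) * y t ^ 2 + (1/2) * y t + x t)
        + 4 * (x t * (1 - y t))) t :=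
    ((hy'.sub_const 2).pow 2).add (hx'.const_mul 4)
  have h3 : HasDerivAt (fun t => Real.exp (t / 2)) (Real.exp (t / 2) * (1/2)) t :=
    ((hasDerivAt_id t).div_const 2).exp
  have hD := (h1.mul h2).mul h3
  convert hD using 1
  case e'_4 => rfl
  case e'_5 => rfl
  case e'_8 => rfl
  have hrw : x t ^ ((-(1/2) : ℝ) - 1) = x t ^ (-(1/2) : ℝ) / x t := by
    rw [Real.rpow_sub hxp, Real.rpow_one]
  rw [hrw]
  simp only [Pi.mul_apply]
  have hxne : x t ≠ 0 := hxp.ne'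
  field_simp
  ring
end

section
/- For b = (1−c)/(2c−3) (with c ≠ 3/2), the Basener–Ross system admits the Darboux invariant I₃ = x^{2(1−c)/(2c−3)}·((y − (3−2c))² + 2(3−2c)x)·exp(2(1−c)t/(3−2c)). Precisely: let c ∈ ℝ with c ≠ 3/2, set b = (1−c)/(2c−3), let I ⊆ ℝ be an open interval and x, y : ℝ → ℝ differentiable on I with x'(t) = x(t)(1 − y(t)), y'(t) = b·y(t)² + (1−c)·y(t) + x(t) and x(t) > 0 for all t ∈ I. Then the function t ↦ x(t)^{2(1−c)/(2c−3)}·((y(t) − (3−2c))² + 2(3−2c)·x(t))·Real.exp(2(1−c)·t/(3−2c)) is constant on I. -/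
/-- For `b = (1−c)/(2c−3)` (with `c ≠ 3/2`), the Basener–Ross system
`ẋ = x(1-y)`, `ẏ = b y² + (1-c) y + x` admits the Darboux invariant
`I₃ = x^(2(1−c)/(2c−3)) ((y − (3−2c))² + 2(3−2c)x) exp(2(1−c)t/(3−2c))`:
along every solution with `x > 0` on an open interval it is constant. -/
theorem basener_ross_darboux_invariant_I3
    (c : ℝ) (hc : c ≠ 3 / 2) (b : ℝ) (hb : b = (1 - c) / (2 * c - 3))
    (I : Set ℝ) (hIopen : IsOpen I) (hIconn : IsPreconnected I)
    (x y : ℝ → ℝ)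
    (hx : ∀ t ∈ I, HasDerivAt x (x t * (1 - y t)) t)
    (hy : ∀ t ∈ I, HasDerivAt y (b * y t ^ 2 + (1 - c) * y t + x t) t)
    (hxpos : ∀ t ∈ I, 0 < x t) :
    ∀ t ∈ I, ∀ t' ∈ I,
      x t ^ (2 * (1 - c) / (2 * c - 3)) *
          ((y t - (3 - 2 * c)) ^ 2 + 2 * (3 - 2 * c) * x t) *
          Real.exp (2 * (1 - c) * t / (3 - 2 * c)) =
        x t' ^ (2 * (1 - c) / (2 * c - 3)) *
          ((y t' - (3 - 2 * c)) ^ 2 + 2 * (3 - 2 * c) * x t') *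
          Real.exp (2 * (1 - c) * t' / (3 - 2 * c)) := by
  have hd : (2 * c - 3) ≠ 0 := by
    intro h; apply hc; linarith
  have hd' : (3 - 2 * c) ≠ 0 := by
    intro h; apply hc; linarith
  set α : ℝ := 2 * (1 - c) / (2 * c - 3) with hα
  set F : ℝ → ℝ := fun t =>
    x t ^ α * ((y t - (3 - 2 * c)) ^ 2 + 2 * (3 - 2 * c) * x t) *
      Real.exp (2 * (1 - c) * t / (3 - 2 * c)) with hF
  have key : ∀ t ∈ I, HasDerivAt F 0 t := by
    intro t ht
    have hxne : x t ≠ 0 := ne_of_gt (hxpos t ht)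
    have h1 : HasDerivAt (fun s => x s ^ α)
        ((x t * (1 - y t)) * α * x t ^ (α - 1)) t :=
      (hx t ht).rpow_const (Or.inl hxne)
    have h2 : HasDerivAt (fun s => (y s - (3 - 2 * c)) ^ 2 + 2 * (3 - 2 * c) * x s)
        ((2 : ℕ) * (y t - (3 - 2 * c)) ^ 1 * (b * y t ^ 2 + (1 - c) * y t + x t)
          + 2 * (3 - 2 * c) * (x t * (1 - y t))) t :=
      (((hy t ht).sub_const _).pow 2).add ((hx t ht).const_mul _)
    have h3 : HasDerivAt (fun s : ℝ => Real.exp (2 * (1 - c) * s / (3 - 2 * c)))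
        (Real.exp (2 * (1 - c) * t / (3 - 2 * c)) * (2 * (1 - c) * 1 / (3 - 2 * c))) t := by
      exact (((hasDerivAt_id t).const_mul (2 * (1 - c))).div_const (3 - 2 * c)).exp
    have hcomb := (h1.mul h2).mul h3
    have hsub : x t ^ (α - 1) = x t ^ α / x t := by
      rw [Real.rpow_sub (hxpos t ht), Real.rpow_one]
    refine hcomb.congr_deriv ?_
    symm
    simp only [Pi.mul_apply]
    have h32 : (3 - 2 * c) = -(2 * c - 3) := by ring
    rw [hsub, hb, hα, h32]
    field_simp
    ring
  have hconv : Convex ℝ I := hIconn.convex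
  intro t ht t' ht'
  have hdiff : DifferentiableOn ℝ F I := fun s hs => ((key s hs).differentiableAt).differentiableWithinAt
  have := hconv.is_const_of_fderivWithin_eq_zero hdiff (fun s hs => by
    rw [fderivWithin_of_isOpen hIopen hs, (key s hs).hasFDerivAt.fderiv]
    ext; simp) ht ht'
  simpa [hF] using this
end

section
/- Darboux criterion for first integrals (Theorem on Darboux integrability, statement (a)): let U ⊆ ℝ² be open, let P, Q : ℝ² → ℝ be continuous, let p ∈ ℕ, and for i = 1, …, p let fᵢ : ℝ² → ℝ be differentiable with fᵢ > 0 on U, let Kᵢ : ℝ² → ℝ, and suppose P·∂fᵢ/∂x + Q·∂fᵢ/∂y = Kᵢ·fᵢ on U. Let λ₁, …, λ_p ∈ ℝ and set F = ∏ᵢ fᵢ^{λᵢ} (real powers). Then Σᵢ λᵢ Kᵢ = 0 on U if and only if P·∂F/∂x + Q·∂F/∂y = 0 on U. -/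
/-- Darboux criterion for first integrals: if `fᵢ > 0` are differentiable on an open
set `U` with cofactors `Kᵢ` for the vector field `(P, Q)`, and `F = ∏ fᵢ^(λᵢ)`, then
`∑ λᵢ Kᵢ = 0` on `U` iff `P ∂F/∂x + Q ∂F/∂y = 0` on `U`. -/
theorem darboux_first_integral_criterion
    (U : Set (ℝ × ℝ)) (hU : IsOpen U) (P Q : ℝ × ℝ → ℝ)
    (hP : ContinuousOn P U) (hQ : ContinuousOn Q U)
    (p : ℕ) (f K : Fin p → ℝ × ℝ → ℝ)
    (hfd : ∀ i, ∀ z ∈ U, DifferentiableAt ℝ (f i) z)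
    (hfpos : ∀ i, ∀ z ∈ U, 0 < f i z)
    (hcof : ∀ i, ∀ z ∈ U,
      P z * fderiv ℝ (f i) z (1, 0) + Q z * fderiv ℝ (f i) z (0, 1) = K i z * f i z)
    (lam : Fin p → ℝ) :
    (∀ z ∈ U, ∑ i, lam i * K i z = 0) ↔
      (∀ z ∈ U,
        P z * fderiv ℝ (fun w => ∏ i, f i w ^ lam i) z (1, 0) +
          Q z * fderiv ℝ (fun w => ∏ i, f i w ^ lam i) z (0, 1) = 0) := by
  -- main derivative computation
  have key : ∀ z ∈ U,
      fderiv ℝ (fun w => ∏ i, f i w ^ lam i) z =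
        (∏ i, f i z ^ lam i) •
          (∑ i, (lam i * (f i z)⁻¹) • fderiv ℝ (f i) z) := by
    intro z hz
    have hS : HasFDerivAt (fun w => ∑ i, lam i * Real.log (f i w))
        (∑ i, (lam i * (f i z)⁻¹) • fderiv ℝ (f i) z) z := by
      apply HasFDerivAt.fun_sum
      intro i _
      have h1 : HasFDerivAt (fun w => Real.log (f i w))
          ((f i z)⁻¹ • fderiv ℝ (f i) z) z :=
        ((hfd i z hz).hasFDerivAt).log (ne_of_gt (hfpos i z hz))
      have := h1.const_mul (lam i)
      rw [mul_smul]
      exact this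
    have hE : HasFDerivAt (fun w => Real.exp (∑ i, lam i * Real.log (f i w)))
        ((Real.exp (∑ i, lam i * Real.log (f i z))) •
          (∑ i, (lam i * (f i z)⁻¹) • fderiv ℝ (f i) z)) z := hS.exp
    have heq : (fun w => ∏ i, f i w ^ lam i) =ᶠ[nhds z]
        (fun w => Real.exp (∑ i, lam i * Real.log (f i w))) := by
      filter_upwards [hU.mem_nhds hz] with w hw
      rw [Real.exp_sum]
      exact Finset.prod_congr rfl fun i _ => by
        rw [Real.rpow_def_of_pos (hfpos i w hw), mul_comm]
    have hF : HasFDerivAt (fun w => ∏ i, f i w ^ lam i)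
        ((Real.exp (∑ i, lam i * Real.log (f i z))) •
          (∑ i, (lam i * (f i z)⁻¹) • fderiv ℝ (f i) z)) z :=
      hE.congr_of_eventuallyEq heq
    rw [hF.fderiv, Real.exp_sum]
    congr 1
    exact Finset.prod_congr rfl fun i _ => by
      rw [Real.rpow_def_of_pos (hfpos i z hz), mul_comm]
  have comp : ∀ z ∈ U,
      P z * fderiv ℝ (fun w => ∏ i, f i w ^ lam i) z (1, 0) +
        Q z * fderiv ℝ (fun w => ∏ i, f i w ^ lam i) z (0, 1) =
      (∏ i, f i z ^ lam i) * ∑ i, lam i * K i z := by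
    intro z hz
    rw [key z hz]
    simp only [ContinuousLinearMap.smul_apply, ContinuousLinearMap.coe_sum',
      Finset.sum_apply, ContinuousLinearMap.coe_smul', Pi.smul_apply,
      smul_eq_mul]
    rw [show ∀ C A B : ℝ, P z * (C * A) + Q z * (C * B) = C * (P z * A + Q z * B)
      from fun _ _ _ => by ring]
    congr 1
    rw [Finset.mul_sum, Finset.mul_sum, ← Finset.sum_add_distrib]
    refine Finset.sum_congr rfl fun i _ => ?_
    have hc := hcof i z hz
    have hne := (hfpos i z hz).ne'
    calc P z * (lam i * (f i z)⁻¹ * fderiv ℝ (f i) z (1, 0)) +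
          Q z * (lam i * (f i z)⁻¹ * fderiv ℝ (f i) z (0, 1))
        = lam i * (f i z)⁻¹ *
            (P z * fderiv ℝ (f i) z (1, 0) + Q z * fderiv ℝ (f i) z (0, 1)) := by ring
      _ = lam i * (f i z)⁻¹ * (K i z * f i z) := by rw [hc]
      _ = lam i * K i z := by field_simp
  constructor
  · intro h z hz
    rw [comp z hz, h z hz, mul_zero]
  · intro h z hz
    have := h z hz
    rw [comp z hz] at this
    have hFpos : 0 < ∏ i, f i z ^ lam i :=
      Finset.prod_pos fun i _ => Real.rpow_pos_of_pos (hfpos i z hz) _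
    exact (mul_eq_zero.mp this).resolve_left hFpos.ne'
end

section
/- Darboux criterion for invariants (Theorem on Darboux integrability, statement (b)): let U ⊆ ℝ² be open, let P, Q : ℝ² → ℝ be continuous, let p ∈ ℕ, and for i = 1, …, p let fᵢ : ℝ² → ℝ be differentiable with fᵢ > 0 on U, let Kᵢ : ℝ² → ℝ satisfy P·∂fᵢ/∂x + Q·∂fᵢ/∂y = Kᵢ·fᵢ on U. Let λ₁, …, λ_p ∈ ℝ and s ∈ ℝ with Σᵢ λᵢ Kᵢ = −s on U. Then for every solution (x(t), y(t)) of ẋ = P(x,y), ẏ = Q(x,y) defined on an open interval I with (x(t), y(t)) ∈ U for all t ∈ I, the function t ↦ (∏ᵢ fᵢ(x(t), y(t))^{λᵢ})·Real.exp(s·t) is constant on I. -/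
/-- Darboux criterion for invariants: if `fᵢ > 0` are differentiable on an open set
`U` with cofactors `Kᵢ` for the vector field `(P, Q)` and `∑ λᵢ Kᵢ = −s` on `U`,
then along every solution `(x(t), y(t))` of `ẋ = P`, `ẏ = Q` staying in `U`, the
function `t ↦ (∏ fᵢ(x(t),y(t))^(λᵢ)) · exp(s t)` is constant. -/
theorem darboux_invariant_criterion
    (U : Set (ℝ × ℝ)) (hU : IsOpen U) (P Q : ℝ × ℝ → ℝ)
    (hP : ContinuousOn P U) (hQ : ContinuousOn Q U)
    (p : ℕ) (f K : Fin p → ℝ × ℝ → ℝ)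
    (hfd : ∀ i, ∀ z ∈ U, DifferentiableAt ℝ (f i) z)
    (hfpos : ∀ i, ∀ z ∈ U, 0 < f i z)
    (hcof : ∀ i, ∀ z ∈ U,
      P z * fderiv ℝ (f i) z (1, 0) + Q z * fderiv ℝ (f i) z (0, 1) = K i z * f i z)
    (lam : Fin p → ℝ) (s : ℝ)
    (hsum : ∀ z ∈ U, ∑ i, lam i * K i z = -s)
    (I : Set ℝ) (hIopen : IsOpen I) (hIconn : IsPreconnected I)
    (x y : ℝ → ℝ)
    (hx : ∀ t ∈ I, HasDerivAt x (P (x t, y t)) t)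
    (hy : ∀ t ∈ I, HasDerivAt y (Q (x t, y t)) t)
    (hmem : ∀ t ∈ I, (x t, y t) ∈ U) :
    ∀ t ∈ I, ∀ t' ∈ I,
      (∏ i, f i (x t, y t) ^ lam i) * Real.exp (s * t) =
        (∏ i, f i (x t', y t') ^ lam i) * Real.exp (s * t') := by
  set g : ℝ → ℝ := fun t => (∑ i, lam i * Real.log (f i (x t, y t))) + s * t with hg
  set F : ℝ → ℝ := fun t => Real.exp (g t) with hF
  -- F agrees with the product expression on I
  have hFeq : ∀ t ∈ I, (∏ i, f i (x t, y t) ^ lam i) * Real.exp (s * t) = F t := by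
    intro t ht
    have : ∏ i, f i (x t, y t) ^ lam i
        = Real.exp (∑ i, lam i * Real.log (f i (x t, y t))) := by
      rw [Real.exp_sum]
      refine Finset.prod_congr rfl fun i _ => ?_
      rw [Real.rpow_def_of_pos (hfpos i _ (hmem t ht))]
      ring_nf
    simp [hF, hg, this, Real.exp_add]
  -- g has derivative 0 at every point of I
  have hg' : ∀ t ∈ I, HasDerivAt g 0 t := by
    intro t ht
    have hzU := hmem t ht
    have hγ : HasDerivAt (fun t => (x t, y t)) (P (x t, y t), Q (x t, y t)) t :=
      (hx t ht).prodMk (hy t ht)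
    have hterm : ∀ i : Fin p,
        HasDerivAt (fun t => lam i * Real.log (f i (x t, y t)))
          (lam i * K i (x t, y t)) t := by
      intro i
      have hfderiv : HasFDerivAt (f i) (fderiv ℝ (f i) (x t, y t)) (x t, y t) :=
        (hfd i _ hzU).hasFDerivAt
      have hcomp : HasDerivAt (fun t => f i (x t, y t))
          (fderiv ℝ (f i) (x t, y t) (P (x t, y t), Q (x t, y t))) t :=
        hfderiv.comp_hasDerivAt t hγ
      have hval : fderiv ℝ (f i) (x t, y t) (P (x t, y t), Q (x t, y t))
          = K i (x t, y t) * f i (x t, y t) := by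
        rw [← hcof i _ hzU]
        have : (P (x t, y t), Q (x t, y t))
            = P (x t, y t) • ((1 : ℝ), (0 : ℝ)) + Q (x t, y t) • ((0 : ℝ), (1 : ℝ)) := by
          simp [Prod.ext_iff]
        rw [this, map_add, map_smul, map_smul, smul_eq_mul, smul_eq_mul]
      rw [hval] at hcomp
      have hne : f i (x t, y t) ≠ 0 := (hfpos i _ hzU).ne'
      have hlog := hcomp.log hne
      have : K i (x t, y t) * f i (x t, y t) / f i (x t, y t) = K i (x t, y t) := by
        field_simp
      rw [this] at hlog
      exact hlog.const_mul (lam i)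
    have hsumd : HasDerivAt (fun t => ∑ i, lam i * Real.log (f i (x t, y t)))
        (∑ i, lam i * K i (x t, y t)) t := HasDerivAt.fun_sum fun i _ => hterm i
    have hlin : HasDerivAt (fun t : ℝ => s * t) s t := by
      simpa using (hasDerivAt_id t).const_mul s
    have := hsumd.fun_add hlin
    rw [hsum _ hzU] at this
    simpa using this
  have hF' : ∀ t ∈ I, HasDerivAt F 0 t := by
    intro t ht
    have := (hg' t ht).exp
    simpa using this
  -- I is convex
  have hconv : Convex ℝ I := hIconn.ordConnected.convex
  intro t ht t' ht'
  rw [hFeq t ht, hFeq t' ht']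
  have hdiff : DifferentiableOn ℝ F I := fun u hu =>
    ((hF' u hu).differentiableAt).differentiableWithinAt
  refine hconv.is_const_of_fderivWithin_eq_zero hdiff (fun u hu => ?_) ht ht'
  have h1 : fderivWithin ℝ F I u = fderiv ℝ F u :=
    fderivWithin_of_isOpen hIopen hu
  rw [h1, (hF' u hu).hasFDerivAt.fderiv]
  ext v
  simp
end

section
/- For c = 1/2 and b = −1/4, the product of the two Darboux invariants I₁ = x^{−1/2}(y² + 4x)e^{−t/2} and I₂ = x^{−1/2}((y−2)² + 4x)e^{t/2} is, up to the identity x^{2b} = x^{−1/2}, a function of the Darboux first integral: for all x > 0 and y ∈ ℝ and t ∈ ℝ, (x^{−1/2}(y² + 4x)·e^{−t/2})·(x^{−1/2}((y−2)² + 4x)·e^{t/2}) = x^{−1}·(y² + 4x)·((y−2)² + 4x); moreover, for any solution (x(t), y(t)) of the system ẋ = x(1−y), ẏ = −(1/4)y² + (1/2)y + x on an open interval I with x(t) > 0, the function t ↦ x(t)^{−1}·(y(t)² + 4x(t))·((y(t)−2)² + 4x(t)) is constant on I. -/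
/-- For `c = 1/2`, `b = −1/4`, the product of the Darboux invariants
`I₁ = x^(−1/2)(y²+4x)e^(−t/2)` and `I₂ = x^(−1/2)((y−2)²+4x)e^(t/2)` equals
`x^(−1)(y²+4x)((y−2)²+4x)`, a function of the Darboux first integral; in particular
the latter is constant along every solution of `ẋ = x(1−y)`,
`ẏ = −(1/4)y² + (1/2)y + x` with `x > 0`. -/
theorem basener_ross_product_of_invariants
    (I : Set ℝ) (hIopen : IsOpen I) (hIconn : IsPreconnected I)
    (x y : ℝ → ℝ)
    (hx : ∀ t ∈ I, HasDerivAt x (x t * (1 - y t)) t)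
    (hy : ∀ t ∈ I, HasDerivAt y (-(1/4) * y t ^ 2 + (1/2) * y t + x t) t)
    (hxpos : ∀ t ∈ I, 0 < x t) :
    (∀ (X Y T : ℝ), 0 < X →
      (X ^ (-(1/2) : ℝ) * (Y ^ 2 + 4 * X) * Real.exp (-T / 2)) *
          (X ^ (-(1/2) : ℝ) * ((Y - 2) ^ 2 + 4 * X) * Real.exp (T / 2)) =
        X ^ (-1 : ℝ) * (Y ^ 2 + 4 * X) * ((Y - 2) ^ 2 + 4 * X)) ∧
      (∀ t ∈ I, ∀ t' ∈ I,
        x t ^ (-1 : ℝ) * (y t ^ 2 + 4 * x t) * ((y t - 2) ^ 2 + 4 * x t) =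
          x t' ^ (-1 : ℝ) * (y t' ^ 2 + 4 * x t') * ((y t' - 2) ^ 2 + 4 * x t')) := by
  constructor
  · intro X Y T hX
    have h1 : X ^ (-(1/2) : ℝ) * X ^ (-(1/2) : ℝ) = X ^ (-1 : ℝ) := by
      rw [← Real.rpow_add hX]; norm_num
    have h2 : Real.exp (-T / 2) * Real.exp (T / 2) = 1 := by
      rw [← Real.exp_add]; ring_nf; exact Real.exp_zero
    calc (X ^ (-(1/2) : ℝ) * (Y ^ 2 + 4 * X) * Real.exp (-T / 2)) *
          (X ^ (-(1/2) : ℝ) * ((Y - 2) ^ 2 + 4 * X) * Real.exp (T / 2))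
        = (X ^ (-(1/2) : ℝ) * X ^ (-(1/2) : ℝ)) * (Y ^ 2 + 4 * X) * ((Y - 2) ^ 2 + 4 * X) *
            (Real.exp (-T / 2) * Real.exp (T / 2)) := by ring
      _ = X ^ (-1 : ℝ) * (Y ^ 2 + 4 * X) * ((Y - 2) ^ 2 + 4 * X) := by rw [h1, h2, mul_one]
  · set G : ℝ → ℝ := fun s => (y s ^ 2 + 4 * x s) * ((y s - 2) ^ 2 + 4 * x s) / x s with hG
    have key : ∀ t ∈ I, HasDerivAt G 0 t := by
      intro t ht
      have hxne : x t ≠ 0 := (hxpos t ht).ne'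
      have hu : HasDerivAt (fun s => y s ^ 2 + 4 * x s)
          (2 * y t ^ 1 * (-(1/4) * y t ^ 2 + (1/2) * y t + x t) + 4 * (x t * (1 - y t))) t :=
        ((hy t ht).pow 2).add ((hx t ht).const_mul 4)
      have hv : HasDerivAt (fun s => (y s - 2) ^ 2 + 4 * x s)
          (2 * (y t - 2) ^ 1 * ((-(1/4) * y t ^ 2 + (1/2) * y t + x t) - 0) + 4 * (x t * (1 - y t))) t :=
        ((((hy t ht).sub (hasDerivAt_const t 2)).pow 2)).add ((hx t ht).const_mul 4)
      have := (hu.mul hv).div (hx t ht) hxne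
      refine this.congr_deriv ?_
      rw [div_eq_iff (pow_ne_zero 2 hxne), zero_mul]
      simp only [Pi.mul_apply]
      ring
    intro t ht t' ht'
    have hconst : G t = G t' := by
      have hord : Set.OrdConnected I := hIconn.ordConnected
      have main : ∀ a ∈ I, ∀ b ∈ I, a ≤ b → G b = G a := by
        intro a ha b hb hab
        have hsub : Set.Icc a b ⊆ I := hord.out ha hb
        refine constant_of_has_deriv_right_zero (f := G) (a := a) (b := b)
          (fun s hs => ((key s (hsub hs)).continuousAt).continuousWithinAt) ?_ b
          (Set.right_mem_Icc.2 hab)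
        intro s hs
        exact (key s (hsub (Set.mem_Icc_of_Ico hs))).hasDerivWithinAt
      rcases le_total t t' with h | h
      · exact (main t ht t' ht' h).symm
      · exact main t' ht' t ht h
    have hrw : ∀ s ∈ I, x s ^ (-1 : ℝ) * (y s ^ 2 + 4 * x s) * ((y s - 2) ^ 2 + 4 * x s) = G s := by
      intro s hs
      rw [Real.rpow_neg_one]
      field_simp [hG]
      simp only [hG]; ring
    rw [hrw t ht, hrw t' ht', hconst]
end
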